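/- arXiv:1701.05403 — 3 statements merged into one kernel-verified Lean document; each statement's English description precedes it below -/
import Mathlib

section
/- For all p, q, u, v ∈ [0,1] and every input bit a : Bool, sampling can be traded arbitrarily between pre-sampling and post-sampling around randomized response: as an equality of probability mass functions on Option Bool, pre-sampling with probability u·v followed by randomized response equals pre-sampling with probability u, then randomized response, then post-sampling with probability v; formally, (PMF.bernoulli (u*v)).bind (fun keep => if keep then (RR p q a).map some else PMF.pure none) = (PMF.bernoulli u).bind (fun keep => if keep then (RR p q a).bind (fun b => (PMF.bernoulli v).bind (fun keep2 => if keep2 then PMF.pure (some b) else PMF.pure none)) else PMF.pure none). -/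
/-- Two-coin randomized response: with probability `p` report the true bit `a`,
otherwise report an independent biased coin coming up `true` with probability `q`. -/
noncomputable def RR (p q : ℝ) (hp : p ≤ 1) (hq : q ≤ 1) (a : Bool) : PMF Bool :=
  (PMF.bernoulli (Real.toNNReal p) (Real.toNNReal_le_one.mpr hp)).bind
    (fun heads => if heads then PMF.pure a
      else PMF.bernoulli (Real.toNNReal q) (Real.toNNReal_le_one.mpr hq))

lemma bernoulli_mul_split (u v : ℝ) (hu0 : 0 ≤ u) (hu1 : u ≤ 1) (hv0 : 0 ≤ v) (hv1 : v ≤ 1) :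
    PMF.bernoulli (Real.toNNReal (u * v))
        (Real.toNNReal_le_one.mpr (mul_le_one₀ hu1 hv0 hv1))
      = (PMF.bernoulli (Real.toNNReal u) (Real.toNNReal_le_one.mpr hu1)).bind
          (fun k => if k then
              PMF.bernoulli (Real.toNNReal v) (Real.toNNReal_le_one.mpr hv1)
            else PMF.pure false) := by
  ext b
  have hc : ∀ x : ℝ, ((Real.toNNReal x : NNReal) : ENNReal) = ENNReal.ofReal x := fun x => rfl
  have h1u : (1 : ENNReal) - ENNReal.ofReal u = ENNReal.ofReal (1 - u) := by
    rw [ENNReal.ofReal_sub _ hu0, ENNReal.ofReal_one]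
  have h1v : (1 : ENNReal) - ENNReal.ofReal v = ENNReal.ofReal (1 - v) := by
    rw [ENNReal.ofReal_sub _ hv0, ENNReal.ofReal_one]
  have h1uv : (1 : ENNReal) - ENNReal.ofReal (u * v) = ENNReal.ofReal (1 - u * v) := by
    rw [ENNReal.ofReal_sub _ (mul_nonneg hu0 hv0), ENNReal.ofReal_one]
  cases b <;>
    simp [hc, PMF.bind_apply, PMF.bernoulli_apply, tsum_bool, h1u, h1v, h1uv,
      ← ENNReal.ofReal_mul hu0] <;>
    rw [← ENNReal.ofReal_add (by nlinarith) (by nlinarith)] <;>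
    exact congrArg _ (by ring)

/-- Arbitrary sampling around randomized response (Corollary 1, first equality):
pre-sampling with probability `u*v` followed by randomized response equals pre-sampling
with probability `u`, then randomized response, then post-sampling with probability `v`. -/
theorem presample_mul_RR_eq_presample_RR_postsample
    (p q u v : ℝ) (hp0 : 0 ≤ p) (hp1 : p ≤ 1) (hq0 : 0 ≤ q) (hq1 : q ≤ 1)
    (hu0 : 0 ≤ u) (hu1 : u ≤ 1) (hv0 : 0 ≤ v) (hv1 : v ≤ 1) (a : Bool) :
    (PMF.bernoulli (Real.toNNReal (u * v))
          (Real.toNNReal_le_one.mpr (mul_le_one₀ hu1 hv0 hv1))).bind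
        (fun keep => if keep then (RR p q hp1 hq1 a).map some else PMF.pure none)
      = (PMF.bernoulli (Real.toNNReal u) (Real.toNNReal_le_one.mpr hu1)).bind
          (fun keep => if keep then
              (RR p q hp1 hq1 a).bind (fun b =>
                (PMF.bernoulli (Real.toNNReal v) (Real.toNNReal_le_one.mpr hv1)).bind
                  (fun keep2 => if keep2 then PMF.pure (some b) else PMF.pure none))
            else PMF.pure none) := by
  set r := RR p q hp1 hq1 a with hr
  set f : Bool → PMF (Option Bool) :=
    fun keep => if keep then r.map some else PMF.pure none with hf
  have hswap : r.bind (fun b =>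
      (PMF.bernoulli (Real.toNNReal v) (Real.toNNReal_le_one.mpr hv1)).bind
        (fun keep2 => if keep2 then PMF.pure (some b) else PMF.pure none))
      = (PMF.bernoulli (Real.toNNReal v) (Real.toNNReal_le_one.mpr hv1)).bind f := by
    rw [PMF.bind_comm]
    refine congrArg _ (funext fun k2 => ?_)
    cases k2 <;> simp [hf, PMF.bind_const, PMF.map, Function.comp_def]
  rw [hswap]
  have hstep : ∀ k : Bool,
      (if k then (PMF.bernoulli (Real.toNNReal v) (Real.toNNReal_le_one.mpr hv1)).bind f
        else PMF.pure none)
      = ((if k then PMF.bernoulli (Real.toNNReal v) (Real.toNNReal_le_one.mpr hv1)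
          else PMF.pure false) : PMF Bool).bind f := by
    intro k; cases k <;> simp [hf]
  simp only [hstep]
  rw [← PMF.bind_bind, ← bernoulli_mul_split u v hu0 hu1 hv0 hv1]
end

section
/- For all p, q, u, v ∈ [0,1] and every input bit a : Bool, pre-sampling with probability u, then randomized response, then post-sampling with probability v yields the same output distribution as randomized response followed by post-sampling with probability u·v; formally, as probability mass functions on Option Bool, (PMF.bernoulli u).bind (fun keep => if keep then (RR p q a).bind (fun b => (PMF.bernoulli v).bind (fun keep2 => if keep2 then PMF.pure (some b) else PMF.pure none)) else PMF.pure none) = (RR p q a).bind (fun b => (PMF.bernoulli (u*v)).bind (fun keep => if keep then PMF.pure (some b) else PMF.pure none)). -/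
/-- Arbitrary sampling around randomized response (Corollary 1, second equality):
pre-sampling with probability `u`, then randomized response, then post-sampling with
probability `v` equals randomized response followed by post-sampling with probability `u*v`. -/
theorem presample_RR_postsample_eq_RR_postsample_mul
    (p q u v : ℝ) (hp0 : 0 ≤ p) (hp1 : p ≤ 1) (hq0 : 0 ≤ q) (hq1 : q ≤ 1)
    (hu0 : 0 ≤ u) (hu1 : u ≤ 1) (hv0 : 0 ≤ v) (hv1 : v ≤ 1) (a : Bool) :
    (PMF.bernoulli (Real.toNNReal u) (Real.toNNReal_le_one.mpr hu1)).bind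
        (fun keep => if keep then
            (RR p q hp1 hq1 a).bind (fun b =>
              (PMF.bernoulli (Real.toNNReal v) (Real.toNNReal_le_one.mpr hv1)).bind
                (fun keep2 => if keep2 then PMF.pure (some b) else PMF.pure none))
          else PMF.pure none)
      = (RR p q hp1 hq1 a).bind (fun b =>
          (PMF.bernoulli (Real.toNNReal (u * v))
              (Real.toNNReal_le_one.mpr (mul_le_one₀ hu1 hv0 hv1))).bind
            (fun keep => if keep then PMF.pure (some b) else PMF.pure none)) := by
  have hsum : (RR p q hp1 hq1 a) false + (RR p q hp1 hq1 a) true = 1 := by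
    rw [← tsum_bool]; exact (RR p q hp1 hq1 a).tsum_coe
  have h1u : (1 : ENNReal) - ENNReal.ofReal u = ENNReal.ofReal (1 - u) := by
    rw [ENNReal.ofReal_sub _ hu0, ENNReal.ofReal_one]
  have h1v : (1 : ENNReal) - ENNReal.ofReal v = ENNReal.ofReal (1 - v) := by
    rw [ENNReal.ofReal_sub _ hv0, ENNReal.ofReal_one]
  have h1uv : (1 : ENNReal) - ENNReal.ofReal (u * v) = ENNReal.ofReal (1 - u * v) := by
    rw [ENNReal.ofReal_sub _ (mul_nonneg hu0 hv0), ENNReal.ofReal_one]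
  have hc : ∀ r : ℝ, ((Real.toNNReal r : NNReal) : ENNReal) = ENNReal.ofReal r := fun r => rfl
  ext x
  simp only [PMF.bind_apply, PMF.pure_apply, PMF.bernoulli_apply, tsum_bool]
  cases x with
  | none =>
    simp only [PMF.bind_apply, PMF.pure_apply, PMF.bernoulli_apply, tsum_bool, Bool.cond_false,
      Bool.cond_true, reduceIte, reduceCtorEq, if_false, if_true, mul_zero, add_zero, mul_one,
      zero_add, zero_mul, ENNReal.coe_sub, ENNReal.coe_one, hc]
    rw [h1u, h1v, h1uv, ← add_mul, hsum, one_mul, ← add_mul, hsum, one_mul,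
      ← ENNReal.ofReal_mul hu0, ← ENNReal.ofReal_add (by nlinarith) (by nlinarith)]
    congr 1; ring
  | some b =>
    simp only [PMF.bind_apply, PMF.pure_apply, PMF.bernoulli_apply, tsum_bool, Bool.cond_false,
      Bool.cond_true, reduceIte, PMF.pure_apply, reduceCtorEq, if_false, mul_zero, zero_add, zero_mul,
      Option.some.injEq, ENNReal.ofReal_mul hu0, ENNReal.coe_sub, ENNReal.coe_one, hc]
    ring
end

section
/- Privacy amplification by sampling, mixture form: let β be a type, P and W probability mass functions on β, ε ≥ 0 a real number, and s ∈ [0,1] a sampling probability. If P b ≤ e^ε · W b for all b : β, then the s-mixture of P and W satisfies, for all b : β, ((PMF.bernoulli s).bind (fun keep => if keep then P else W)) b ≤ (1 + s*(e^ε - 1)) * W b; that is, the mixture is ln(1+s(e^ε−1))-close to W in the pointwise multiplicative sense. -/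
/-- Privacy amplification by sampling, mixture form: if `P` is pointwise dominated by
`e^ε · W`, then the `s`-mixture of `P` and `W` is pointwise dominated by
`(1 + s(e^ε − 1)) · W`. -/
theorem mixture_amplification
    {β : Type*} (P W : PMF β) (ε : ℝ) (hε : 0 ≤ ε)
    (s : ℝ) (hs0 : 0 ≤ s) (hs1 : s ≤ 1)
    (hPW : ∀ b : β, P b ≤ ENNReal.ofReal (Real.exp ε) * W b) :
    ∀ b : β,
      ((PMF.bernoulli (Real.toNNReal s) (Real.toNNReal_le_one.mpr hs1)).bind
          (fun keep => if keep then P else W)) b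
        ≤ ENNReal.ofReal (1 + s * (Real.exp ε - 1)) * W b := by
  intro b
  rw [PMF.bind_apply, tsum_bool]
  simp only [PMF.bernoulli_apply, Bool.cond_false, Bool.cond_true, if_true, if_false]
  have h1 : (1 : ENNReal) - ENNReal.ofReal s = ENNReal.ofReal (1 - s) := by
    rw [← ENNReal.ofReal_one, ← ENNReal.ofReal_sub _ hs0]
  have h2 : (1 : ℝ) + s * (Real.exp ε - 1) = (1 - s) + s * Real.exp ε := by ring
  calc (1 - ENNReal.ofReal s) * W b + ENNReal.ofReal s * P b
      ≤ (1 - ENNReal.ofReal s) * W b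
        + ENNReal.ofReal s * (ENNReal.ofReal (Real.exp ε) * W b) :=
        add_le_add_right (mul_le_mul_right (hPW b) _) _
    _ = ENNReal.ofReal (1 + s * (Real.exp ε - 1)) * W b := by
        rw [h1, h2, ENNReal.ofReal_add (by linarith) (by positivity),
          ← mul_assoc, ← ENNReal.ofReal_mul hs0, add_mul]
end
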